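/- Let R be a finite commutative local ring of order q^n with q odd, R/J(R) of order q, J(R)^{n-1} ≠ 0, and let k be even with 0 ≤ k < n. Then the squaring map restricted to J^{k/2} \ J^{k/2+1} has image in J^k \ J^{k+1} of size exactly q^{n-k-1}(q-1)/2; i.e., exactly half of the elements of J^k \ J^{k+1} are squares in R. -/

import Mathlib

open IsLocalRing

theorem my_struct {R : Type*} [CommRing R] [Fintype R] [IsLocalRing R]
    (q n : ℕ) (hn : 0 < n)
    (hcard : Fintype.card R = q ^ n)
    (hres : Nat.card (R ⧸ maximalIdeal R) = q)
    (hJ : (maximalIdeal R) ^ (n - 1) ≠ ⊥) :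
    ∃ π : R, π ∈ maximalIdeal R ∧
      (∀ i ≤ n, (maximalIdeal R) ^ i = Ideal.span {π ^ i}) ∧
      (∀ i ≤ n, Nat.card ((maximalIdeal R) ^ i : Ideal R) = q ^ (n - i)) ∧
      (maximalIdeal R) ^ n = ⊥ ∧
      (∀ i < n, (maximalIdeal R) ^ i ≠ (maximalIdeal R) ^ (i + 1)) := by
  classical
  set M := maximalIdeal R with hM
  -- q ≥ 2
  have hFfin : Finite (R ⧸ M) := Finite.of_surjective _ Ideal.Quotient.mk_surjective
  have hFnt : Nontrivial (R ⧸ M) := Ideal.Quotient.nontrivial_iff.mpr (maximalIdeal.isMaximal R).ne_top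
  have hq2 : 2 ≤ q := by
    have := Finite.one_lt_card (α := R ⧸ M)
    omega
  have hq0 : 0 < q := by omega
  -- strictness
  obtain ⟨N, hN⟩ := IsArtinianRing.isNilpotent_jacobson_bot (R := R)
  rw [jacobson_eq_maximalIdeal ⊥ bot_ne_top, ← hM] at hN
  have hstrict : ∀ i < n, M ^ i ≠ M ^ (i + 1) := by
    intro i hi heq
    have hstep : ∀ r, M ^ (i + r) = M ^ i := by
      intro r
      induction r with
      | zero => rfl
      | succ r ih => rw [← add_assoc, pow_succ, ih, ← pow_succ, ← heq]
    apply hJ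
    have h1 : M ^ i = ⊥ := by
      rw [Ideal.zero_eq_bot] at hN
      rw [← hstep N, pow_add, hN, Ideal.mul_bot]
    exact le_antisymm ((Ideal.pow_le_pow_right (by omega)).trans h1.le) bot_le
  -- residue section
  have hsur : Function.Surjective (Ideal.Quotient.mk M) := Ideal.Quotient.mk_surjective
  set g : (R ⧸ M) → R := Function.surjInv hsur with hgdef
  have hg : ∀ a, Ideal.Quotient.mk M (g a) = a := Function.surjInv_eq hsur
  have hgdiff : ∀ a b : R ⧸ M, a ≠ b → IsUnit (g a - g b) := by
    intro a b hab
    rw [← notMem_maximalIdeal, ← hM]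
    intro h
    apply hab
    have : Ideal.Quotient.mk M (g a - g b) = 0 := Ideal.Quotient.eq_zero_iff_mem.mpr h
    rw [map_sub, hg, hg, sub_eq_zero] at this
    exact this
  -- injection
  have hinj : ∀ i : ℕ, ∀ x ∈ M ^ i, x ∉ M ^ (i + 1) →
      ∃ f : (R ⧸ M) × (M ^ (i + 1) : Ideal R) → (M ^ i : Ideal R),
        Function.Injective f ∧ ∀ p, (f p : R) = g p.1 * x + p.2 := by
    intro i x hx hx'
    refine ⟨fun p => ⟨g p.1 * x + p.2, add_mem (Ideal.mul_mem_left _ _ hx)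
      (Ideal.pow_le_pow_right (Nat.le_succ i) p.2.2)⟩, ?_, fun p => rfl⟩
    rintro ⟨a, y⟩ ⟨b, z⟩ h
    simp only [Subtype.mk.injEq] at h
    by_cases hab : a = b
    · subst hab
      have hyz : (y : R) = z := add_left_cancel h
      exact Prod.ext rfl (Subtype.ext hyz)
    · exfalso
      have hzy : (g a - g b) * x = (z : R) - y := by linear_combination h
      have hmem : (g a - g b) * x ∈ M ^ (i + 1) := by
        rw [hzy]; exact sub_mem z.2 y.2
      exact hx' ((Ideal.unit_mul_mem_iff_mem _ (hgdiff a b hab)).mp hmem)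
  -- cardinality step
  have hcstep : ∀ i < n, q * Nat.card (M ^ (i+1) : Ideal R) ≤ Nat.card (M ^ i : Ideal R) := by
    intro i hi
    have hlt : M ^ (i+1) < M ^ i :=
      lt_of_le_of_ne (Ideal.pow_le_pow_right (Nat.le_succ i)) (Ne.symm (hstrict i hi))
    obtain ⟨x, hx, hx'⟩ := SetLike.exists_of_lt hlt
    obtain ⟨f, hf, -⟩ := hinj i x hx hx'
    have := Nat.card_le_card_of_injective f hf
    rwa [Nat.card_prod, hres] at this
  have hc0 : Nat.card (M ^ 0 : Ideal R) = q ^ n := by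
    rw [pow_zero, Ideal.one_eq_top, Nat.card_congr Submodule.topEquiv.toEquiv, Nat.card_eq_fintype_card, hcard]
  have hub : ∀ i ≤ n, q ^ i * Nat.card (M ^ i : Ideal R) ≤ q ^ n := by
    intro i hi
    induction i with
    | zero => rw [pow_zero, one_mul, hc0]
    | succ i ih =>
      calc q ^ (i+1) * Nat.card (M ^ (i+1) : Ideal R)
          = q ^ i * (q * Nat.card (M ^ (i+1) : Ideal R)) := by ring
        _ ≤ q ^ i * Nat.card (M ^ i : Ideal R) :=
            Nat.mul_le_mul_left _ (hcstep i (by omega))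
        _ ≤ q ^ n := ih (by omega)
  have hlbaux : ∀ d ≤ n, q ^ d ≤ Nat.card (M ^ (n - d) : Ideal R) := by
    intro d
    induction d with
    | zero =>
      intro _
      have : Nonempty (M ^ (n - 0) : Ideal R) := ⟨0⟩
      simpa [Nat.one_le_iff_ne_zero, Nat.pos_iff_ne_zero] using Nat.card_pos (α := (M ^ (n - 0) : Ideal R))
    | succ d ih =>
      intro hd
      have h1 : n - (d+1) + 1 = n - d := by omega
      have h2 := hcstep (n - (d+1)) (by omega)
      rw [h1] at h2
      calc q ^ (d+1) = q * q ^ d := by ring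
        _ ≤ q * Nat.card (M ^ (n - d) : Ideal R) := Nat.mul_le_mul_left _ (ih (by omega))
        _ ≤ _ := h2
  have hc : ∀ i ≤ n, Nat.card (M ^ i : Ideal R) = q ^ (n - i) := by
    intro i hi
    have h1 := hub i hi
    have h2 := hlbaux (n - i) (by omega)
    rw [show n - (n - i) = i by omega] at h2
    have hqi : 0 < q ^ i := Nat.pow_pos hq0
    have h3 : q ^ i * q ^ (n - i) = q ^ n := by rw [← pow_add]; congr 1; omega
    rw [← h3] at h1
    have h4 := Nat.le_of_mul_le_mul_left h1 hqi
    omega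
  have hMn : M ^ n = ⊥ := by
    have h1 : Nat.card (M ^ n : Ideal R) = 1 := by simpa using hc n le_rfl
    rw [eq_bot_iff]
    intro x hx
    have hsub : Subsingleton (M ^ n : Ideal R) := (Nat.card_eq_one_iff_unique.mp h1).1
    have hh : (⟨x, hx⟩ : (M ^ n : Ideal R)) = ⟨0, zero_mem _⟩ := Subsingleton.elim _ _
    simpa [Ideal.mem_bot] using congrArg Subtype.val hh
  by_cases hn1 : n = 1
  · subst hn1
    have hM1 : M = ⊥ := by simpa using hMn
    refine ⟨0, by simp [hM1], ?_, hc, hMn, hstrict⟩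
    intro i hi
    interval_cases i
    · simp
    · rw [pow_one, hM1, pow_one]
      exact (Ideal.span_singleton_eq_bot.mpr rfl).symm
  · -- n ≥ 2
    have hn2 : 2 ≤ n := by omega
    have hlt : M ^ 2 < M ^ 1 :=
      lt_of_le_of_ne (Ideal.pow_le_pow_right one_le_two)
        (Ne.symm (by simpa using hstrict 1 (by omega)))
    obtain ⟨π, hπ1, hπ2⟩ := SetLike.exists_of_lt hlt
    rw [pow_one] at hπ1
    have hπ2' : π ∉ M ^ (1+1) := by simpa using hπ2
    obtain ⟨f, hf, hfval⟩ := hinj 1 π (by simpa using hπ1) hπ2'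
    have hbij : Function.Bijective f := by
      refine (Nat.bijective_iff_injective_and_card f).mpr ⟨hf, ?_⟩
      rw [Nat.card_prod, hres]
      have e1 : Nat.card (M ^ (1+1) : Ideal R) = q ^ (n - 2) := hc 2 hn2
      have e2 : Nat.card (M ^ 1 : Ideal R) = q ^ (n - 1) := hc 1 (by omega)
      rw [e1, e2, ← pow_succ']
      congr 1
      omega
    have hMsup : M ≤ Ideal.span {π} ⊔ M ^ 2 := by
      intro z hz
      obtain ⟨⟨a, y⟩, hp⟩ := hbij.2 ⟨z, by simpa using hz⟩
      have hz' : g a * π + (y : R) = z := by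
        have := hfval ⟨a, y⟩
        rw [hp] at this
        exact this.symm
      refine Submodule.mem_sup.mpr ⟨g a * π, Ideal.mem_span_singleton.mpr
        (Dvd.intro_left _ rfl), y, by simpa using y.2, hz'⟩
    have hsup : ∀ i : ℕ, M ^ i ≤ Ideal.span {π ^ i} ⊔ M ^ (i + 1) := by
      intro i
      induction i with
      | zero => simp [Ideal.span_singleton_one]
      | succ i ih =>
        calc M ^ (i+1) = M ^ i * M := pow_succ _ _
          _ ≤ (Ideal.span {π ^ i} ⊔ M ^ (i+1)) * M := Ideal.mul_mono_left ih
          _ = Ideal.span {π ^ i} * M ⊔ M ^ (i+2) := by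
              rw [Ideal.sup_mul, ← pow_succ]
          _ ≤ Ideal.span {π ^ i} * (Ideal.span {π} ⊔ M ^ 2) ⊔ M ^ (i+2) :=
              sup_le_sup_right (Ideal.mul_mono_right hMsup) _
          _ ≤ Ideal.span {π ^ (i+1)} ⊔ M ^ (i+2) := by
              rw [Ideal.mul_sup]
              apply sup_le (sup_le ?_ ?_) le_sup_right
              · rw [Ideal.span_singleton_mul_span_singleton, ← pow_succ]
                exact le_sup_left
              · refine le_trans ?_ le_sup_right
                calc Ideal.span {π ^ i} * M ^ 2 ≤ M ^ i * M ^ 2 :=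
                      Ideal.mul_mono_left (by
                        rw [Ideal.span_le, Set.singleton_subset_iff]
                        exact Ideal.pow_mem_pow hπ1 i)
                  _ = M ^ (i+2) := by rw [← pow_add]
    have hπn0 : π ^ n = 0 := by
      have : π ^ n ∈ M ^ n := Ideal.pow_mem_pow hπ1 n
      rwa [hMn, Ideal.mem_bot] at this
    have hspan : ∀ i ≤ n, M ^ i = Ideal.span {π ^ i} := by
      have key : ∀ d : ℕ, ∀ i, i + d = n → M ^ i = Ideal.span {π ^ i} := by
        intro d
        induction d with
        | zero =>
          intro i hi
          rw [show i = n by omega, hMn, hπn0]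
          exact (Ideal.span_singleton_eq_bot.mpr rfl).symm
        | succ d ih =>
          intro i hi
          have h1 : M ^ (i+1) = Ideal.span {π ^ (i+1)} := ih (i+1) (by omega)
          refine le_antisymm ?_ ?_
          · refine le_trans (hsup i) (sup_le le_rfl ?_)
            rw [h1]
            exact Ideal.span_singleton_le_span_singleton.mpr ⟨π, by rw [pow_succ]⟩
          · rw [Ideal.span_le, Set.singleton_subset_iff]
            exact Ideal.pow_mem_pow hπ1 i
      intro i hi
      exact key (n - i) i (by omega)
    exact ⟨π, hπ1, hspan, hc, hMn, hstrict⟩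

theorem card_squares_in_radical_layer {R : Type*} [CommRing R] [Fintype R] [IsLocalRing R]
    (q n k : ℕ) (hq : Odd q) (hke : Even k) (hkn : k < n)
    (hcard : Fintype.card R = q ^ n)
    (hres : Nat.card (R ⧸ (⊥ : Ideal R).jacobson) = q)
    (hJ : ((⊥ : Ideal R).jacobson) ^ (n - 1) ≠ ⊥) :
    (∀ s : R, s ∈ ((⊥ : Ideal R).jacobson) ^ (k / 2) →
      s ∉ ((⊥ : Ideal R).jacobson) ^ (k / 2 + 1) →
      s ^ 2 ∈ ((⊥ : Ideal R).jacobson) ^ k ∧ s ^ 2 ∉ ((⊥ : Ideal R).jacobson) ^ (k + 1)) ∧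
    {u : R | ∃ s : R, s ∈ ((⊥ : Ideal R).jacobson) ^ (k / 2) ∧
      s ∉ ((⊥ : Ideal R).jacobson) ^ (k / 2 + 1) ∧ s ^ 2 = u}.ncard
      = q ^ (n - k - 1) * (q - 1) / 2 := by
  classical
  have hJM : (⊥ : Ideal R).jacobson = maximalIdeal R := jacobson_eq_maximalIdeal ⊥ bot_ne_top
  rw [hJM] at hres hJ
  simp only [hJM]
  set M := maximalIdeal R with hMdef
  obtain ⟨π, hπM, hspan, hc, hMn, hstrict⟩ := my_struct q n (by omega) hcard hres hJ
  obtain ⟨t, rfl⟩ := hke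
  set m := (t + t) / 2 with hmdef
  have hm2 : m + m = t + t := by omega
  set k := t + t with hkdef
  have hmn : m < n := by omega
  -- q ≥ 2
  have hFfin : Finite (R ⧸ M) := Finite.of_surjective _ Ideal.Quotient.mk_surjective
  have hFnt : Nontrivial (R ⧸ M) := Ideal.Quotient.nontrivial_iff.mpr (maximalIdeal.isMaximal R).ne_top
  have hq2 : 2 ≤ q := by
    have := Finite.one_lt_card (α := R ⧸ M)
    omega
  have hq0 : 0 < q := by omega
  -- 2 is a unit
  have h2 : IsUnit (2 : R) := by
    by_contra h2u
    have h2M : (2 : R) ∈ M := by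
      by_contra hh; exact h2u (notMem_maximalIdeal.mp hh)
    have hF0 : (2 : R ⧸ M) = 0 := by
      have h := Ideal.Quotient.eq_zero_iff_mem.mpr h2M
      rwa [map_ofNat] at h
    have hord : addOrderOf (1 : R ⧸ M) = 2 := by
      apply addOrderOf_eq_prime
      · show 2 • (1 : R ⧸ M) = 0
        rw [two_smul, one_add_one_eq_two, hF0]
      · exact one_ne_zero
    have hdvd : (2 : ℕ) ∣ q := by
      rw [← hres, ← hord]
      exact addOrderOf_dvd_natCard _
    rw [Nat.odd_iff] at hq
    omega
  -- layer structure
  have hlayer : ∀ i, i < n → ∀ x : R,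
      (x ∈ M ^ i ∧ x ∉ M ^ (i+1)) ↔ ∃ u, IsUnit u ∧ x = u * π ^ i := by
    intro i hi x
    constructor
    · rintro ⟨h1, h2⟩
      rw [hspan i hi.le, Ideal.mem_span_singleton] at h1
      obtain ⟨r, hr⟩ := h1
      refine ⟨r, ?_, by rw [hr]; ring⟩
      by_contra hru
      have hrM : r ∈ M := by
        by_contra hh; exact hru (notMem_maximalIdeal.mp hh)
      apply h2
      rw [hr, pow_succ]
      exact Ideal.mul_mem_mul (Ideal.pow_mem_pow hπM i) hrM
    · rintro ⟨u, hu, rfl⟩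
      constructor
      · exact Ideal.mul_mem_left _ _ (Ideal.pow_mem_pow hπM i)
      · intro hmem
        have hπmem : π ^ i ∈ M ^ (i+1) := (Ideal.unit_mul_mem_iff_mem _ hu).mp hmem
        apply hstrict i hi
        refine le_antisymm ?_ (Ideal.pow_le_pow_right (Nat.le_succ i))
        rw [hspan i hi.le, Ideal.span_le, Set.singleton_subset_iff]
        exact hπmem
  -- annihilator
  have hπn1 : π ^ (n-1) ≠ 0 := by
    intro h
    apply hJ
    rw [hspan (n-1) (by omega), h]
    exact Ideal.span_singleton_eq_bot.mpr rfl
  have hann : ∀ i ≤ n, ∀ b : R, π ^ i * b = 0 → b ∈ M ^ (n - i) := by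
    intro i hi b hb
    by_cases hb0 : b = 0
    · rw [hb0]; exact zero_mem _
    have hbn : b ∉ M ^ n := by rw [hMn, Ideal.mem_bot]; exact hb0
    set j := Nat.findGreatest (fun j => b ∈ M ^ j) n with hj
    have hbj : b ∈ M ^ j :=
      Nat.findGreatest_spec (P := fun j => b ∈ M ^ j) (Nat.zero_le n)
        (show b ∈ M ^ 0 by rw [pow_zero, Ideal.one_eq_top]; exact Submodule.mem_top)
    have hjle : j ≤ n := Nat.findGreatest_le n
    have hjn : j < n := lt_of_le_of_ne hjle (by intro h; exact hbn (h ▸ hbj))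
    have hbj1 : b ∉ M ^ (j+1) := fun h => by
      have := Nat.le_findGreatest (P := fun j => b ∈ M ^ j) (show j+1 ≤ n by omega) h
      omega
    obtain ⟨w, hw, hweq⟩ := (hlayer j hjn b).mp ⟨hbj, hbj1⟩
    have h0 : π ^ (i + j) = 0 := by
      have h' : w * π ^ (i + j) = 0 := by
        calc w * π ^ (i+j) = π ^ i * (w * π ^ j) := by rw [pow_add]; ring
          _ = π ^ i * b := by rw [hweq]
          _ = 0 := hb
      exact (hw.mul_right_eq_zero).mp h'
    have hij : n ≤ i + j := by
      by_contra hlt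
      apply hπn1
      have hsplit : π ^ (n-1) = π ^ (i+j) * π ^ (n-1-(i+j)) := by
        rw [← pow_add]; congr 1; omega
      rw [hsplit, h0, zero_mul]
    exact Ideal.pow_le_pow_right (by omega) hbj
  constructor
  · -- first conjunct
    intro s hs1 hs2
    obtain ⟨u, hu, rfl⟩ := (hlayer m hmn s).mp ⟨hs1, hs2⟩
    have hsq : (u * π ^ m) ^ 2 = u ^ 2 * π ^ k := by
      rw [mul_pow, ← pow_mul]
      rw [show m * 2 = k by omega]
    rw [hsq]
    have := (hlayer k hkn (u ^ 2 * π ^ k)).mpr ⟨u ^ 2, hu.pow 2, rfl⟩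
    exact this
  · -- counting
    set D : Finset R := Finset.univ.filter (fun s => s ∈ M ^ m ∧ s ∉ M ^ (m+1)) with hD
    have hDcoe : (D : Set R) = ((M ^ m : Ideal R) : Set R) \ ((M ^ (m+1) : Ideal R) : Set R) := by
      ext x
      simp [hD, Set.mem_diff]
    have hsetc : ∀ i ≤ n, ((M ^ i : Ideal R) : Set R).ncard = q ^ (n - i) := by
      intro i hi
      rw [← Nat.card_coe_set_eq]
      exact hc i hi
    have hDcard : D.card = q ^ (n - m) - q ^ (n - m - 1) := by
      rw [← Set.ncard_coe_finset, hDcoe,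
        Set.ncard_diff (by exact_mod_cast Ideal.pow_le_pow_right (Nat.le_succ m)),
        hsetc m hmn.le, hsetc (m+1) (by omega)]
      congr 1 <;> omega
    have hsub1 : (M ^ (n - m) : Ideal R) ≤ M ^ (m+1) := Ideal.pow_le_pow_right (by omega)
    have hsubm : (M ^ (n - m) : Ideal R) ≤ M ^ m := Ideal.pow_le_pow_right (by omega)
    have htwo : ∀ x : R, 2 * x ∈ M ^ (m+1) → x ∈ M ^ (m+1) := fun x hx =>
      (Ideal.unit_mul_mem_iff_mem _ h2).mp hx
    have hAcard : ((M ^ (n - m) : Ideal R) : Set R).ncard = q ^ m := by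
      rw [hsetc (n-m) (by omega)]
      congr 1 <;> omega
    have hfib : ∀ s : R, s ∈ M ^ m → s ∉ M ^ (m+1) →
        {x : R | (x ∈ M ^ m ∧ x ∉ M ^ (m+1)) ∧ x ^ 2 = s ^ 2}
          = (fun y => s + y) '' ((M ^ (n-m) : Ideal R) : Set R)
            ∪ (fun y => -s + y) '' ((M ^ (n-m) : Ideal R) : Set R) := by
      intro s hs1 hs2
      ext x
      simp only [Set.mem_setOf_eq, Set.mem_union, Set.mem_image, SetLike.mem_coe]
      constructor
      · rintro ⟨⟨hx1, hx2⟩, hxs⟩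
        have hzero : (x + s) * (x - s) = 0 := by linear_combination hxs
        by_cases hcase : x + s ∈ M ^ (m+1)
        · have hxs2 : x - s ∉ M ^ (m+1) := by
            intro hmem
            apply hx2
            apply htwo
            have h2x : 2 * x = (x + s) + (x - s) := by ring
            rw [h2x]; exact add_mem hcase hmem
          obtain ⟨u, hu, hueq⟩ := (hlayer m hmn (x - s)).mp ⟨sub_mem hx1 hs1, hxs2⟩
          have hzero2 : π ^ m * (x + s) = 0 := by
            have h' : u * (π ^ m * (x + s)) = 0 := by
              calc u * (π ^ m * (x + s)) = (x - s) * (x + s) := by rw [hueq]; ring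
                _ = 0 := by linear_combination hzero
            exact (hu.mul_right_eq_zero).mp h'
          have hmem := hann m hmn.le (x + s) hzero2
          right
          exact ⟨x + s, hmem, by ring⟩
        · obtain ⟨u, hu, hueq⟩ := (hlayer m hmn (x + s)).mp ⟨add_mem hx1 hs1, hcase⟩
          have hzero2 : π ^ m * (x - s) = 0 := by
            have h' : u * (π ^ m * (x - s)) = 0 := by
              calc u * (π ^ m * (x - s)) = (x + s) * (x - s) := by rw [hueq]; ring
                _ = 0 := hzero
            exact (hu.mul_right_eq_zero).mp h'
          have hmem := hann m hmn.le (x - s) hzero2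
          left
          exact ⟨x - s, hmem, by ring⟩
      · have haux : ∀ y ∈ M ^ (n - m), s * y = 0 ∧ y * y = 0 := by
          intro y hy
          constructor
          · have hmem : s * y ∈ M ^ m * M ^ (n - m) := Ideal.mul_mem_mul hs1 hy
            rw [← pow_add, show m + (n - m) = n by omega, hMn, Ideal.mem_bot] at hmem
            exact hmem
          · have hmem : y * y ∈ M ^ (n-m) * M ^ (n-m) := Ideal.mul_mem_mul hy hy
            rw [← pow_add] at hmem
            have hmem2 := Ideal.pow_le_pow_right (show n ≤ (n-m)+(n-m) by omega) hmem
            rwa [hMn, Ideal.mem_bot] at hmem2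
        rintro (⟨y, hy, rfl⟩ | ⟨y, hy, rfl⟩)
        · obtain ⟨hsy, hyy⟩ := haux y hy
          refine ⟨⟨add_mem hs1 (hsubm hy), ?_⟩, ?_⟩
          · intro hmem
            apply hs2
            have hss : s = (s + y) - y := by ring
            rw [hss]; exact sub_mem hmem (hsub1 hy)
          · have hexp : (s + y) ^ 2 = s ^ 2 + 2 * (s * y) + y * y := by ring
            rw [hexp, hsy, hyy]; ring
        · obtain ⟨hsy, hyy⟩ := haux y hy
          refine ⟨⟨add_mem (neg_mem hs1) (hsubm hy), ?_⟩, ?_⟩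
          · intro hmem
            apply hs2
            have hss : s = y - (-s + y) := by ring
            rw [hss]; exact sub_mem (hsub1 hy) hmem
          · have hexp : (-s + y) ^ 2 = s ^ 2 - 2 * (s * y) + y * y := by ring
            rw [hexp, hsy, hyy]; ring
    have hfibcard : ∀ s : R, s ∈ M ^ m → s ∉ M ^ (m+1) →
        (D.filter (fun x => x ^ 2 = s ^ 2)).card = 2 * q ^ m := by
      intro s hs1 hs2
      have hcoe : ↑(D.filter (fun x => x ^ 2 = s ^ 2))
          = {x : R | (x ∈ M ^ m ∧ x ∉ M ^ (m+1)) ∧ x ^ 2 = s ^ 2} := by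
        ext x
        simp [hD, and_assoc]
      have hdisj : Disjoint
          ((fun y => s + y) '' ((M ^ (n-m) : Ideal R) : Set R))
          ((fun y => -s + y) '' ((M ^ (n-m) : Ideal R) : Set R)) := by
        rw [Set.disjoint_left]
        rintro z ⟨y, hy, rfl⟩ ⟨w, hw, hzw⟩
        have h2s : 2 * s = w - y := by linear_combination -hzw
        apply hs2
        apply htwo
        rw [h2s]
        exact hsub1 (sub_mem hw hy)
      rw [← Set.ncard_coe_finset, hcoe, hfib s hs1 hs2,
        Set.ncard_union_eq hdisj (Set.toFinite _) (Set.toFinite _),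
        Set.ncard_image_of_injective _ (add_right_injective s),
        Set.ncard_image_of_injective _ (add_right_injective (-s)), hAcard]
      ring
    set T : Finset R := D.image (fun x => x ^ 2) with hT
    have hTset : {u : R | ∃ s : R, s ∈ M ^ m ∧ s ∉ M ^ (m+1) ∧ s ^ 2 = u} = (T : Set R) := by
      ext u
      simp only [hT, hD, Set.mem_setOf_eq, Finset.coe_image, Set.mem_image,
        Finset.mem_coe, Finset.mem_filter, Finset.mem_univ, true_and]
      constructor
      · rintro ⟨s, h1, h2, h3⟩; exact ⟨s, ⟨h1, h2⟩, h3⟩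
      · rintro ⟨s, ⟨h1, h2⟩, h3⟩; exact ⟨s, h1, h2, h3⟩
    have hsum : D.card = T.card * (2 * q ^ m) := by
      rw [Finset.card_eq_sum_card_image (fun x : R => x ^ 2) D]
      have hconst : ∀ b ∈ T, (D.filter (fun a => a ^ 2 = b)).card = 2 * q ^ m := by
        intro b hb
        obtain ⟨s, hsD, rfl⟩ := Finset.mem_image.mp hb
        have hs := Finset.mem_filter.mp hsD
        exact hfibcard s hs.2.1 hs.2.2
      rw [Finset.sum_congr rfl hconst, Finset.sum_const, smul_eq_mul]
    have hqm : 0 < q ^ m := Nat.pow_pos hq0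
    have hDcard2 : D.card = (q ^ (n - k - 1) * (q - 1)) * q ^ m := by
      rw [hDcard]
      have e2 : n - m - 1 = (n - k - 1) + m := by omega
      have e1 : n - m = ((n - k - 1) + m) + 1 := by omega
      rw [e2, e1, pow_succ]
      have hX : q ^ (n - k - 1) * (q - 1) * q ^ m = q ^ ((n - k - 1) + m) * (q - 1) := by
        rw [mul_right_comm, ← pow_add]
      rw [hX, Nat.mul_sub, mul_one]
    have hTcard : 2 * T.card = q ^ (n - k - 1) * (q - 1) := by
      have h' : (2 * T.card) * q ^ m = (q ^ (n - k - 1) * (q - 1)) * q ^ m := by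
        rw [← hDcard2, hsum]; ring
      exact Nat.eq_of_mul_eq_mul_right hqm h'
    rw [hTset, Set.ncard_coe_finset]
    omega
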